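/- With the rounding scheme W_i(e)=b(i)·⌈W(e)/b(i)⌉ where b(i)=(1+ε)^i and ε∈O(1), for i = max{0, ⌊log_{1+ε}(ε·Wd(v,w)/h_{v,w})⌋} one has (1+ε)·Wd(v,w) ≤ C·b(i)·h_{v,w}/ε for an absolute constant C (i.e., (1+ε)Wd(v,w) ∈ O(b(i)h_{v,w}/ε)). Consequently Wd_i(v,w)/b(i) ∈ O(h_{v,w}/ε). -/

import Mathlib

/-- Total weight of a walk under an edge-weight function. -/
noncomputable def walkWeight {V : Type*} {G : SimpleGraph V} (W : Sym2 V → ℝ)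
    {u v : V} (p : G.Walk u v) : ℝ :=
  (p.edges.map W).sum

private lemma list_length_le_sum (l : List ℝ) (h : ∀ x ∈ l, 1 ≤ x) :
    (l.length : ℝ) ≤ l.sum := by
  induction l with
  | nil => simp
  | cons a t ih =>
    simp only [List.length_cons, List.sum_cons, Nat.cast_succ]
    have := h a List.mem_cons_self
    have := ih (fun x hx => h x (List.mem_cons_of_mem a hx))
    linarith

private lemma sum_map_le_sum_map_add {α : Type*} (l : List α) (f g : α → ℝ) (c : ℝ)
    (h : ∀ x ∈ l, f x ≤ g x + c) :
    (l.map f).sum ≤ (l.map g).sum + l.length * c := by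
  induction l with
  | nil => simp
  | cons a t ih =>
    simp only [List.map_cons, List.sum_cons, List.length_cons, Nat.cast_succ]
    have := h a List.mem_cons_self
    have := ih (fun x hx => h x (List.mem_cons_of_mem a hx))
    nlinarith

theorem rounding_hop_bound (εmax : ℝ) (hmax : 0 < εmax) :
    ∃ C : ℝ, 0 < C ∧
      ∀ {V : Type} (G : SimpleGraph V) (W : Sym2 V → ℕ), (∀ e, 0 < W e) →
        ∀ ε : ℝ, 0 < ε → ε ≤ εmax → ∀ v w : V, v ≠ w →
          ∀ p : G.Walk v w,
            (∀ q : G.Walk v w, walkWeight (fun e => (W e : ℝ)) p ≤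
              walkWeight (fun e => (W e : ℝ)) q) →
            (∀ q : G.Walk v w, walkWeight (fun e => (W e : ℝ)) q =
              walkWeight (fun e => (W e : ℝ)) p → p.length ≤ q.length) →
            (let Wd : ℝ := walkWeight (fun e => (W e : ℝ)) p
             let h : ℕ := p.length
             let i : ℕ := (⌊Real.logb (1 + ε) (ε * Wd / h)⌋).toNat
             let b : ℝ := (1 + ε) ^ i
             let Wi : Sym2 V → ℝ := fun e => b * (⌈(W e : ℝ) / b⌉ : ℤ)
             (1 + ε) * Wd ≤ C * b * h / ε ∧
               sInf {x : ℝ | ∃ q : G.Walk v w, x = walkWeight Wi q} / b ≤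
                 C * h / ε) := by
  refine ⟨(1 + εmax) ^ 2 + εmax, by positivity, ?_⟩
  intro V G W hW ε hε hεmax v w hvw p _ _
  intro Wd h i b Wi
  set C : ℝ := (1 + εmax) ^ 2 + εmax with hC
  -- basic positivity facts
  have hb1 : (1 : ℝ) < 1 + ε := by linarith
  have hb0 : (0 : ℝ) < b := by positivity
  have hhn : 1 ≤ h := by
    show 1 ≤ p.length
    rw [Nat.one_le_iff_ne_zero]
    exact fun h0 => hvw (p.eq_of_length_eq_zero h0)
  have hh0 : (0 : ℝ) < (h : ℝ) := by exact_mod_cast hhn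
  have hh1 : (1 : ℝ) ≤ (h : ℝ) := by exact_mod_cast hhn
  -- Wd ≥ h ≥ 1
  have hedgelen : p.edges.length = h := p.length_edges
  have hWd_ge : (h : ℝ) ≤ Wd := by
    have := list_length_le_sum (p.edges.map fun e => (W e : ℝ)) ?_
    · simpa [walkWeight, hedgelen, Wd] using this
    · intro x hx
      simp only [List.mem_map] at hx
      obtain ⟨e, _, rfl⟩ := hx
      exact_mod_cast hW e
  have hWd0 : (0 : ℝ) < Wd := lt_of_lt_of_le hh0 hWd_ge
  -- the key logarithm bound: ε * Wd / h < (1+ε) * b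
  have hx0 : (0 : ℝ) < ε * Wd / h := by positivity
  have hkey : ε * Wd / h < (1 + ε) * b := by
    have hfloor : Real.logb (1 + ε) (ε * Wd / h) < (i : ℝ) + 1 := by
      have h1 : (⌊Real.logb (1 + ε) (ε * Wd / h)⌋ : ℝ) ≤ (i : ℝ) := by
        have := Int.self_le_toNat ⌊Real.logb (1 + ε) (ε * Wd / h)⌋
        exact_mod_cast this
      have h2 := Int.lt_floor_add_one (Real.logb (1 + ε) (ε * Wd / h))
      linarith
    have := (Real.rpow_lt_rpow_left_iff hb1).mpr hfloor
    rw [Real.rpow_logb (by linarith) (by linarith) hx0] at this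
    calc ε * Wd / h < (1 + ε) ^ (((i : ℝ)) + 1) := this
      _ = (1 + ε) * b := by
          rw [show ((i : ℝ) + 1) = ((i + 1 : ℕ) : ℝ) by push_cast; ring,
            Real.rpow_natCast]
          show (1 + ε) ^ (i + 1) = (1 + ε) * (1 + ε) ^ i
          ring
  have hWdlt : ε * Wd < (1 + ε) * b * h := by
    have := (div_lt_iff₀ hh0).mp hkey
    linarith
  have hCge : (1 + ε) ^ 2 ≤ C := by nlinarith
  constructor
  · -- first bound
    rw [le_div_iff₀ hε]
    nlinarith [mul_pos hb0 hh0, mul_pos (mul_pos hb0 hh0) hε]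
  · -- second bound
    have hWip : walkWeight Wi p ≤ Wd + h * b := by
      have := sum_map_le_sum_map_add p.edges Wi (fun e => (W e : ℝ)) b ?_
      · simpa [walkWeight, hedgelen, Wd] using this
      · intro e _
        show b * (⌈(W e : ℝ) / b⌉ : ℤ) ≤ (W e : ℝ) + b
        have hceil : ((⌈(W e : ℝ) / b⌉ : ℤ) : ℝ) < (W e : ℝ) / b + 1 :=
          Int.ceil_lt_add_one _
        have := mul_lt_mul_of_pos_left hceil hb0
        rw [mul_add, mul_one, mul_div_cancel₀ _ (ne_of_gt hb0)] at this
        linarith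
    have hmem : walkWeight Wi p ∈ {x : ℝ | ∃ q : G.Walk v w, x = walkWeight Wi q} :=
      ⟨p, rfl⟩
    have hbdd : BddBelow {x : ℝ | ∃ q : G.Walk v w, x = walkWeight Wi q} := by
      refine ⟨0, fun x hx => ?_⟩
      obtain ⟨q, rfl⟩ := hx
      apply List.sum_nonneg
      intro y hy
      simp only [List.mem_map] at hy
      obtain ⟨e, _, rfl⟩ := hy
      have : (0 : ℝ) ≤ ((⌈(W e : ℝ) / b⌉ : ℤ) : ℝ) := by
        have : (0 : ℤ) ≤ ⌈(W e : ℝ) / b⌉ := Int.ceil_nonneg (by positivity)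
        exact_mod_cast this
      positivity
    have hsInf : sInf {x : ℝ | ∃ q : G.Walk v w, x = walkWeight Wi q} ≤ Wd + h * b :=
      le_trans (csInf_le hbdd hmem) hWip
    clear_value Wd i b Wi C
    rw [div_le_div_iff₀ hb0 hε]
    have h1 : sInf {x : ℝ | ∃ q : G.Walk v w, x = walkWeight Wi q} * ε ≤
        (Wd + h * b) * ε := by nlinarith
    have h2 : (Wd + h * b) * ε ≤ C * h * b := by
      have e1 : Wd * ε ≤ (1 + ε) * b * h := by nlinarith
      have e2 : (h : ℝ) * b * ε ≤ εmax * (h * b) := by nlinarith [mul_pos hh0 hb0]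
      have e3 : (1 + ε) * b * h ≤ (1 + εmax) ^ 2 * (h * b) := by
        have hle : (1 : ℝ) + ε ≤ (1 + εmax) ^ 2 := by nlinarith
        have := mul_le_mul_of_nonneg_right hle (le_of_lt (mul_pos hh0 hb0))
        nlinarith
      have hceq : C * h * b = (1 + εmax) ^ 2 * (h * b) + εmax * (h * b) := by
        rw [hC]; ring
      linarith
    exact h1.trans h2
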